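/- The inductance is injective on admissible twigs: if A and B are admissible twigs with d(Ā)·d(B) = d(B̄)·d(A) (i.e. e(A) = e(B)), then A = B as lists. -/

import Mathlib

open Matrix BigOperators

/-- The intersection-type matrix of a twig `A = [a_1,...,a_r]`: the `r × r` symmetric
tridiagonal matrix with diagonal entries `a_1,...,a_r` and `-1` on the sub/super-diagonals. -/
def twigMatrix (A : List ℤ) : Matrix (Fin A.length) (Fin A.length) ℤ :=
  fun i j =>
    if i = j then A.get i
    else if (i : ℕ) + 1 = (j : ℕ) ∨ (j : ℕ) + 1 = (i : ℕ) then -1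
    else 0

/-- The determinant `d(A)` of a twig; in particular `d([]) = 1`. -/
def twigDet (A : List ℤ) : ℤ := (twigMatrix A).det

/-- A twig is admissible if it is nonempty and all its entries are `≥ 2`. -/
def Admissible (A : List ℤ) : Prop := A ≠ [] ∧ ∀ a ∈ A, 2 ≤ a

def tmat {m : ℕ} (d : Fin m → ℤ) : Matrix (Fin m) (Fin m) ℤ :=
  fun i j => if i = j then d i else if (i:ℕ)+1 = (j:ℕ) ∨ (j:ℕ)+1 = (i:ℕ) then -1 else 0

lemma tmat_det_rec (n : ℕ) (d : Fin (n+2) → ℤ) :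
    (tmat d).det = d 0 * (tmat (d ∘ Fin.succ)).det - (tmat (d ∘ Fin.succ ∘ Fin.succ)).det := by
  have hsa1 : ∀ j : Fin n, ((0 : Fin (n+1)).succ).succAbove j.succ = j.succ.succ := by
    intro j
    rw [Fin.succAbove_of_le_castSucc]
    simp [Fin.le_def]
  have hsa10 : ((0 : Fin (n+1)).succ).succAbove 0 = 0 := by
    rw [Fin.succAbove_of_castSucc_lt] <;> simp [Fin.lt_def]
  have h1 : (tmat d).submatrix Fin.succ ((0 : Fin (n+2)).succAbove) = tmat (d ∘ Fin.succ) := by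
    ext i j
    simp only [Matrix.submatrix_apply, Fin.zero_succAbove, tmat, Fin.succ_inj, Fin.val_succ,
      add_left_inj, Function.comp_apply]
  set N : Matrix (Fin (n+1)) (Fin (n+1)) ℤ :=
    (tmat d).submatrix Fin.succ (((0 : Fin (n+1)).succ).succAbove) with hN
  have h2 : N.submatrix Fin.succ Fin.succ = tmat (d ∘ Fin.succ ∘ Fin.succ) := by
    ext i j
    simp only [hN, Matrix.submatrix_apply, hsa1, tmat, Fin.succ_inj, Fin.val_succ,
      add_left_inj, Function.comp_apply]
  have hN0 : ∀ i : Fin (n+1), N i 0 = if i = 0 then -1 else 0 := by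
    intro i
    simp only [hN, Matrix.submatrix_apply, hsa10, tmat]
    by_cases h : i = 0
    · subst h
      norm_num [Fin.ext_iff]
    · have hv : ¬ ((i : ℕ) = 0) := fun hi => h (Fin.ext (by rw [hi, Fin.val_zero]))
      have h1' : ¬ (i.succ = (0 : Fin (n+2))) := Fin.succ_ne_zero i
      have h2' : ¬ ((i.succ : ℕ) + 1 = ((0:Fin (n+2)) : ℕ) ∨ ((0:Fin (n+2)) : ℕ) + 1 = (i.succ : ℕ)) := by
        simp only [Fin.val_succ, Fin.val_zero]
        omega
      simp [h1', h2', h, hv]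
  have hdN : N.det = - (tmat (d ∘ Fin.succ ∘ Fin.succ)).det := by
    rw [Matrix.det_succ_column_zero, Fin.sum_univ_succ]
    have hz : ∀ i : Fin n, (-1 : ℤ)^((i.succ : Fin (n+1)) : ℕ) * N i.succ 0
        * ((N.submatrix i.succ.succAbove Fin.succ).det) = 0 := by
      intro i
      rw [hN0]
      simp [Fin.succ_ne_zero]
    rw [Finset.sum_congr rfl (fun i _ => hz i)]
    rw [hN0]
    have hsz : ((0:Fin (n+1)).succAbove) = Fin.succ := funext (Fin.zero_succAbove)
    simp [hsz, h2]
  have hrow : ∀ j : Fin n, (tmat d) 0 j.succ.succ = 0 := by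
    intro j
    have h1' : ¬ ((0 : Fin (n+2)) = j.succ.succ) := by simp [Fin.ext_iff]
    have h2' : ¬ (((0 : Fin (n+2)) : ℕ) + 1 = (j.succ.succ : ℕ) ∨ ((j.succ.succ : ℕ)) + 1 = ((0 : Fin (n+2)) : ℕ)) := by
      simp [Fin.val_succ]
    simp [tmat, h1', h2']
  rw [Matrix.det_succ_row_zero, Fin.sum_univ_succ, Fin.sum_univ_succ]
  have hz2 : ∀ j : Fin n, (-1 : ℤ)^((j.succ.succ : Fin (n+2)) : ℕ)
      * (tmat d) 0 j.succ.succ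
      * ((tmat d).submatrix Fin.succ j.succ.succ.succAbove).det = 0 := by
    intro j
    rw [hrow]; ring
  rw [Finset.sum_congr rfl (fun j _ => hz2 j)]
  have e00 : (tmat d) 0 0 = d 0 := by simp [tmat]
  have e01 : (tmat d) 0 (0 : Fin (n+1)).succ = -1 := by
    have h1' : ¬ ((0 : Fin (n+2)) = (0 : Fin (n+1)).succ) := by simp [Fin.ext_iff]
    simp [tmat, h1', Fin.ext_iff]
  rw [e00, e01, h1, ← hN, hdN]
  simp [Fin.val_succ]
  ring

lemma twigDet_nil : twigDet [] = 1 := by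
  simp [twigDet, Matrix.det_isEmpty]

lemma twigDet_singleton (a : ℤ) : twigDet [a] = a := by
  simp [twigDet, Matrix.det_fin_one, twigMatrix]

lemma twigDet_cons_cons (a b : ℤ) (A : List ℤ) :
    twigDet (a :: b :: A) = a * twigDet (b :: A) - twigDet A := by
  have h := tmat_det_rec A.length ((a :: b :: A).get)
  have e1 : ((a :: b :: A).get) ∘ Fin.succ = (b :: A).get := by
    funext i; rcases i with ⟨i, hi⟩; rfl
  have e2 : ((a :: b :: A).get) ∘ Fin.succ ∘ Fin.succ = A.get := by
    funext i; rcases i with ⟨i, hi⟩; rfl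
  have e0 : (a :: b :: A).get (0 : Fin (A.length + 2)) = a := rfl
  rw [e0, e1, e2] at h
  exact h

/-- For an admissible twig, `1 ≤ d(tail) < d(A)`. -/
lemma twig_growth : ∀ (A : List ℤ), Admissible A →
    1 ≤ twigDet A.tail ∧ twigDet A.tail < twigDet A
  | [], h => absurd rfl h.1
  | [a], h => by
      have ha : 2 ≤ a := h.2 a (by simp)
      simp [twigDet_nil, twigDet_singleton]
      omega
  | (a :: b :: A), h => by
      have ha : 2 ≤ a := h.2 a (by simp)
      have htail : Admissible (b :: A) := ⟨by simp, fun x hx => h.2 x (by simp [hx])⟩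
      obtain ⟨h1, h2⟩ := twig_growth (b :: A) htail
      simp only [List.tail_cons] at h1 h2
      constructor
      · simpa using le_trans h1 (le_of_lt h2)
      · simp only [List.tail_cons, twigDet_cons_cons]
        nlinarith

lemma twig_coprime : ∀ (A : List ℤ), IsCoprime (twigDet A) (twigDet A.tail)
  | [] => by simpa [twigDet_nil] using isCoprime_one_left
  | [a] => by simpa [twigDet_nil, twigDet_singleton] using isCoprime_one_right
  | (a :: b :: A) => by
      have ih := twig_coprime (b :: A)
      simp only [List.tail_cons] at ih ⊢
      rw [twigDet_cons_cons]
      have h : a * twigDet (b :: A) - twigDet A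
          = -(twigDet A) + a * twigDet (b :: A) := by ring
      rw [h]
      exact (ih.symm.neg_left).add_mul_right_left a

/-- the inductance `e(A) = d(Ā)/d(A)` is injective on admissible twigs:
if `d(Ā)·d(B) = d(B̄)·d(A)` for admissible twigs `A` and `B`, then `A = B`. -/
theorem stmt2 (A B : List ℤ) (hA : Admissible A) (hB : Admissible B)
    (h : twigDet A.tail * twigDet B = twigDet B.tail * twigDet A) :
    A = B := by
  induction A generalizing B with
  | nil => exact absurd rfl hA.1
  | cons a A' ih =>
    -- first: twigDet equality
    obtain ⟨gA1, gA2⟩ := twig_growth _ hA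
    obtain ⟨gB1, gB2⟩ := twig_growth _ hB
    have hdAB : twigDet (a :: A') = twigDet B := by
      have hdvd1 : twigDet (a :: A') ∣ twigDet B := by
        apply (twig_coprime (a :: A')).dvd_of_dvd_mul_left
        exact ⟨twigDet B.tail, by rw [h]; ring⟩
      have hdvd2 : twigDet B ∣ twigDet (a :: A') := by
        apply (twig_coprime B).dvd_of_dvd_mul_left
        exact ⟨twigDet (a :: A').tail, by rw [← h]; ring⟩
      exact Int.dvd_antisymm (by linarith) (by linarith) hdvd1 hdvd2
    have hdtail : twigDet (a :: A').tail = twigDet B.tail := by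
      have hBne : twigDet B ≠ 0 := by linarith
      have := h
      rw [hdAB] at this
      exact mul_right_cancel₀ hBne this
    rcases B with _ | ⟨b, B'⟩
    · exact absurd rfl hB.1
    rcases A' with _ | ⟨a2, A''⟩
    · -- A = [a]
      rcases B' with _ | ⟨b2, B''⟩
      · -- B = [b]
        have : a = b := by
          rw [← twigDet_singleton a, ← twigDet_singleton b]
          exact hdAB
        rw [this]
      · -- B = b :: b2 :: B'' : contradiction with tails
        exfalso
        have hB'adm : Admissible (b2 :: B'') :=
          ⟨by simp, fun x hx => hB.2 x (List.mem_cons_of_mem _ hx)⟩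
        obtain ⟨g1, g2⟩ := twig_growth _ hB'adm
        simp only [List.tail_cons, twigDet_nil] at hdtail
        linarith
    · -- A = a :: a2 :: A''
      rcases B' with _ | ⟨b2, B''⟩
      · exfalso
        have hA'adm : Admissible (a2 :: A'') :=
          ⟨by simp, fun x hx => hA.2 x (List.mem_cons_of_mem _ hx)⟩
        obtain ⟨g1, g2⟩ := twig_growth _ hA'adm
        simp only [List.tail_cons, twigDet_nil] at hdtail
        linarith
      · -- both have length ≥ 2
        have hA'adm : Admissible (a2 :: A'') :=
          ⟨by simp, fun x hx => hA.2 x (List.mem_cons_of_mem _ hx)⟩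
        have hB'adm : Admissible (b2 :: B'') :=
          ⟨by simp, fun x hx => hB.2 x (List.mem_cons_of_mem _ hx)⟩
        simp only [List.tail_cons] at hdtail
        obtain ⟨gA1', gA2'⟩ := twig_growth _ hA'adm
        obtain ⟨gB1', gB2'⟩ := twig_growth _ hB'adm
        simp only [List.tail_cons] at gA1' gA2' gB1' gB2'
        set q := twigDet (a2 :: A'') with hq
        have hqB : twigDet (b2 :: B'') = q := hdtail.symm
        set s := twigDet A'' with hs
        set t := twigDet B'' with ht
        rw [hqB] at gB2'
        have hdet : a * q - s = b * q - t := by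
          have h1 := twigDet_cons_cons a a2 A''
          have h2 := twigDet_cons_cons b b2 B''
          rw [← hq, ← hs] at h1
          rw [hqB, ← ht] at h2
          rw [← h1, ← h2, hdAB]
        have hqpos : (0 : ℤ) ≤ q := by linarith
        have hab1 : a = b := by
          rcases lt_trichotomy a b with hlt | heq | hgt
          · exfalso
            have := mul_le_mul_of_nonneg_right (show a + 1 ≤ b by omega) hqpos
            linarith
          · exact heq
          · exfalso
            have := mul_le_mul_of_nonneg_right (show b + 1 ≤ a by omega) hqpos
            linarith
        have hst : s = t := by
          rw [hab1] at hdet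
          linarith
        have htails : a2 :: A'' = b2 :: B'' := by
          apply ih _ hA'adm hB'adm
          simp only [List.tail_cons, hqB]
          rw [← hs, ← ht, hst]
        rw [hab1, htails]
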